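/- Let r : ℝ → ℝ be the half-integer rounding (r(ξ) = ξ if ξ ∈ ℤ, r(ξ) = ⌊ξ⌋ + 1/2 otherwise). If h : ℝ → ℝ is strictly monotone increasing and satisfies h(y + 1) = h(y) + 1 for all y, then for all y₁, y₂ ∈ ℝ, r(h(y₂) − h(y₁)) = r(y₂ − y₁). -/

import Mathlib

theorem stmt_2 (r : ℝ → ℝ)
    (hr_int : ∀ ξ : ℝ, (∃ n : ℤ, ξ = n) → r ξ = ξ)
    (hr_nint : ∀ ξ : ℝ, (¬ ∃ n : ℤ, ξ = n) → r ξ = ⌊ξ⌋ + 1/2)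
    (h : ℝ → ℝ) (hmono : StrictMono h)
    (hper : ∀ y : ℝ, h (y + 1) = h y + 1) :
    ∀ y₁ y₂ : ℝ, r (h y₂ - h y₁) = r (y₂ - y₁) := by
  have hn : ∀ (y : ℝ) (n : ℤ), h (y + n) = h y + n := by
    intro y n
    induction n using Int.induction_on with
    | zero => simp
    | succ k ih =>
        push_cast
        have := hper (y + k)
        push_cast at this ih
        rw [← add_assoc, this, ih]; ring
    | pred k ih =>
        push_cast
        have := hper (y + (-(k:ℝ) - 1))
        have : h (y + (-(k:ℝ) - 1)) = h (y + (-(k:ℝ) - 1) + 1) - 1 := by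
          rw [hper]; ring
        push_cast at ih
        rw [show y + (-(k:ℝ) - 1) + 1 = y + -(k:ℝ) by ring] at this
        rw [this, ih]; ring
  intro y₁ y₂
  set n : ℤ := ⌊y₂ - y₁⌋ with hnn
  have h1 : y₁ + n ≤ y₂ := by
    have := Int.floor_le (y₂ - y₁); linarith
  have h2 : y₂ < y₁ + (n + 1) := by
    have := Int.lt_floor_add_one (y₂ - y₁); push_cast; linarith
  have hg1 : h y₁ + n ≤ h y₂ := by
    have := hmono.le_iff_le.mpr h1
    rwa [hn y₁ n] at this
  have hg2 : h y₂ < h y₁ + (n + 1) := by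
    have := hmono h2
    rw [show y₁ + ((n:ℝ) + 1) = y₁ + ((n + 1 : ℤ) : ℝ) by push_cast; ring,
      hn y₁ (n + 1)] at this
    push_cast at this ⊢; linarith
  have hfl : ⌊h y₂ - h y₁⌋ = n := by
    rw [Int.floor_eq_iff]
    exact ⟨by linarith, by push_cast; linarith⟩
  by_cases hc : ∃ m : ℤ, y₂ - y₁ = m
  · obtain ⟨m, hm⟩ := hc
    have hy2 : y₂ = y₁ + m := by linarith
    have : h y₂ - h y₁ = m := by rw [hy2, hn]; ring
    rw [hr_int _ ⟨m, this⟩, hr_int _ ⟨m, hm⟩, this, hm]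
  · have hlt : (n : ℝ) < y₂ - y₁ :=
      lt_of_le_of_ne (by linarith) (fun he => hc ⟨n, he.symm⟩)
    have hg1' : (n : ℝ) < h y₂ - h y₁ := by
      have := hmono (show y₁ + (n:ℝ) < y₂ by linarith)
      rw [hn y₁ n] at this; linarith
    have hc2 : ¬ ∃ m : ℤ, h y₂ - h y₁ = m := by
      rintro ⟨m, hm⟩
      have : m = n := by rw [← hfl, hm, Int.floor_intCast]
      rw [hm, this] at hg1'; exact lt_irrefl _ hg1'
    rw [hr_nint _ hc2, hr_nint _ hc, hfl, hnn]
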